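/- Let n be even and N = 2^n. A matrix E ∈ SU(N) satisfies E · conj(E† X E) · E† = S X̄ S for every X ∈ su(N) (i.e., E is an entangler, intertwining the Cartan involution X ↦ X̄ with the involution θ(X) = S⁻¹ X̄ S; note S⁻¹ = S for n even) if and only if E Eᵀ = ξ S for some ξ ∈ ℂ with ξ^N = 1. -/

import Mathlib

open Matrix Complex

noncomputable section

/-- Number of ones in the binary expansion of `j`. -/
def popCnt (j : ℕ) : ℕ := (Nat.digits 2 j).sum

/-- The `N × N` matrix `S = (-iσ^y) ⊗ ⋯ ⊗ (-iσ^y)` (`n` factors), `N = 2^n`;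
equivalently `S |j⟩ = (-1)^{#j} |N-1-j⟩`. -/
def Smat (n : ℕ) : Matrix (Fin (2 ^ n)) (Fin (2 ^ n)) ℂ :=
  fun k j => if (k : ℕ) + (j : ℕ) = 2 ^ n - 1 then (-1 : ℂ) ^ popCnt (j : ℕ) else 0

/-- The standard entangler `E₀` (for `n` even):
`E₀ = (1/√2) Σ_{j<N/2} ( |j⟩⟨2j| + i|j⟩⟨2j+1| + (-1)^{#j}(|N-j-1⟩⟨2j| - i|N-j-1⟩⟨2j+1|) )`. -/
def E0 (n : ℕ) : Matrix (Fin (2 ^ n)) (Fin (2 ^ n)) ℂ :=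
  fun r c =>
    (Real.sqrt 2 : ℂ)⁻¹ *
      (if (r : ℕ) < 2 ^ n / 2 then
        (if (c : ℕ) = 2 * (r : ℕ) then 1
         else if (c : ℕ) = 2 * (r : ℕ) + 1 then Complex.I else 0)
      else
        (if (c : ℕ) = 2 * (2 ^ n - 1 - (r : ℕ)) then
            (-1 : ℂ) ^ popCnt (2 ^ n - 1 - (r : ℕ))
         else if (c : ℕ) = 2 * (2 ^ n - 1 - (r : ℕ)) + 1 then
            -Complex.I * (-1 : ℂ) ^ popCnt (2 ^ n - 1 - (r : ℕ))
         else 0))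

/-- `Σ = Σ_{j<N/2} ( |j⟩⟨N/2+j| - |N/2+j⟩⟨j| )`. -/
def SigmaMat (n : ℕ) : Matrix (Fin (2 ^ n)) (Fin (2 ^ n)) ℂ :=
  fun r c =>
    if (c : ℕ) = (r : ℕ) + 2 ^ n / 2 then 1
    else if (r : ℕ) = (c : ℕ) + 2 ^ n / 2 then -1 else 0

/-- The standard finagler `F₀` (for `n` odd):
`F₀ = (1/√2) Σ_{j<N/2} ( |j⟩⟨j| + |N-j-1⟩⟨j| + (-1)^{#j}(|j⟩⟨N/2+j| - |N-j-1⟩⟨N/2+j|) )`. -/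
def F0 (n : ℕ) : Matrix (Fin (2 ^ n)) (Fin (2 ^ n)) ℂ :=
  fun r c =>
    (Real.sqrt 2 : ℂ)⁻¹ *
      (if (r : ℕ) < 2 ^ n / 2 then
        (if (c : ℕ) = (r : ℕ) then 1
         else if (c : ℕ) = (r : ℕ) + 2 ^ n / 2 then (-1 : ℂ) ^ popCnt (r : ℕ) else 0)
      else
        (if (c : ℕ) = 2 ^ n - 1 - (r : ℕ) then 1
         else if (c : ℕ) = (2 ^ n - 1 - (r : ℕ)) + 2 ^ n / 2 then
            -(-1 : ℂ) ^ popCnt (2 ^ n - 1 - (r : ℕ))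
         else 0))

/-- The concurrence capacity `κ(v) = sup { |(vψ)ᵀ S (vψ)| : ‖ψ‖ = 1, ψᵀSψ = 0 }`. -/
def kappa (n : ℕ) (v : Matrix (Fin (2 ^ n)) (Fin (2 ^ n)) ℂ) : ℝ :=
  sSup { r : ℝ | ∃ ψ : Fin (2 ^ n) → ℂ,
    star ψ ⬝ᵥ ψ = 1 ∧ ψ ⬝ᵥ ((Smat n) *ᵥ ψ) = 0 ∧
    r = ‖(v *ᵥ ψ) ⬝ᵥ ((Smat n) *ᵥ (v *ᵥ ψ))‖ }



lemma popCnt_zero : popCnt 0 = 0 := by simp [popCnt]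

lemma popCnt_pos (m : ℕ) (hm : 0 < m) : popCnt m = m % 2 + popCnt (m / 2) := by
  unfold popCnt
  rw [Nat.digits_def' (by norm_num : 1 < 2) hm, List.sum_cons]

lemma popCnt_two_mul (q : ℕ) : popCnt (2 * q) = popCnt q := by
  rcases Nat.eq_zero_or_pos q with h | h
  · simp [h, popCnt_zero]
  · rw [popCnt_pos _ (by omega)]
    simp [Nat.mul_div_cancel_left _ (by norm_num : 0 < 2), Nat.mul_mod_right]

lemma popCnt_two_mul_add_one (q : ℕ) : popCnt (2 * q + 1) = popCnt q + 1 := by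
  rw [popCnt_pos _ (by omega)]
  have h1 : (2 * q + 1) % 2 = 1 := by omega
  have h2 : (2 * q + 1) / 2 = q := by omega
  rw [h1, h2, Nat.add_comm]

lemma popCnt_pow_add : ∀ n d : ℕ, d < 2 ^ n → popCnt (2 ^ n + d) = popCnt d + 1 := by
  intro n
  induction n with
  | zero => intro d hd; interval_cases d; show popCnt 1 = popCnt 0 + 1; simp [popCnt]
  | succ n ih =>
    intro d hd
    rcases Nat.even_or_odd d with ⟨q, hq⟩ | ⟨q, hq⟩
    · have hq' : q < 2 ^ n := by subst hq; rw [pow_succ] at hd; omega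
      have : 2 ^ (n+1) + d = 2 * (2 ^ n + q) := by subst hq; rw [pow_succ]; ring
      rw [this, popCnt_two_mul, ih q hq', hq, ← two_mul, popCnt_two_mul]
    · have hq' : q < 2 ^ n := by subst hq; rw [pow_succ] at hd; omega
      have : 2 ^ (n+1) + d = 2 * (2 ^ n + q) + 1 := by subst hq; rw [pow_succ]; ring
      rw [this, popCnt_two_mul_add_one, ih q hq', hq, popCnt_two_mul_add_one]

lemma popCnt_compl : ∀ n j : ℕ, j < 2 ^ n → popCnt j + popCnt (2 ^ n - 1 - j) = n := by
  intro n
  induction n with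
  | zero => intro j hj; interval_cases j; simp [popCnt_zero]
  | succ n ih =>
    intro j hj
    have h2 : (2:ℕ) ^ (n+1) = 2 * 2 ^ n := by rw [pow_succ]; ring
    have h1 : (1:ℕ) ≤ 2 ^ n := Nat.one_le_two_pow
    rcases Nat.even_or_odd j with ⟨q, hq⟩ | ⟨q, hq⟩
    · rw [← two_mul] at hq
      subst hq
      have hq' : q < 2 ^ n := by omega
      have hc : 2 ^ (n+1) - 1 - 2 * q = 2 * (2 ^ n - 1 - q) + 1 := by omega
      rw [hc, popCnt_two_mul, popCnt_two_mul_add_one]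
      have := ih q hq'; omega
    · subst hq
      have hq' : q < 2 ^ n := by omega
      have hc : 2 ^ (n+1) - 1 - (2 * q + 1) = 2 * (2 ^ n - 1 - q) := by omega
      rw [hc, popCnt_two_mul, popCnt_two_mul_add_one]
      have := ih q hq'; omega


lemma neg_one_pow_eq_of_even_add {a b : ℕ} (h : Even (a + b)) :
    ((-1 : ℂ)) ^ a = (-1) ^ b := by
  have h1 : ((-1:ℂ)) ^ a * (-1) ^ b = 1 := by
    rw [← pow_add]; exact h.neg_one_pow
  have h2 : ((-1:ℂ)) ^ b * (-1) ^ b = 1 := by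
    rw [← pow_add]; exact (Even.add_self b).neg_one_pow
  have hb : ((-1:ℂ)) ^ b ≠ 0 := pow_ne_zero _ (by norm_num)
  exact mul_right_cancel₀ hb (h1.trans h2.symm)

lemma Smat_mul_transpose (n : ℕ) : Smat n * (Smat n)ᵀ = 1 := by
  have h1 : (1:ℕ) ≤ 2 ^ n := Nat.one_le_two_pow
  ext k j
  rw [Matrix.mul_apply]
  have hk := k.isLt
  have hj := j.isLt
  set m₀ : Fin (2 ^ n) := ⟨2 ^ n - 1 - (k : ℕ), by omega⟩ with hm₀
  have hm₀v : (m₀ : ℕ) = 2 ^ n - 1 - (k : ℕ) := by rw [hm₀]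
  rw [Finset.sum_eq_single m₀]
  · have hc1 : (k : ℕ) + (m₀ : ℕ) = 2 ^ n - 1 := by omega
    have hS1 : Smat n k m₀ = (-1 : ℂ) ^ popCnt (m₀ : ℕ) := by
      simp only [Smat]; rw [if_pos hc1]
    rw [Matrix.transpose_apply, hS1]
    by_cases hkj : k = j
    · subst hkj
      rw [hS1, Matrix.one_apply_eq, ← pow_add]
      exact (Even.add_self _).neg_one_pow
    · have hc2 : ¬ ((j : ℕ) + (m₀ : ℕ) = 2 ^ n - 1) := by
        intro hcon
        exact hkj (Fin.ext (by omega))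
      have hS2 : Smat n j m₀ = 0 := by
        simp only [Smat]; rw [if_neg hc2]
      rw [hS2, mul_zero, Matrix.one_apply_ne (by exact hkj)]
  · intro b _ hb
    have hc : ¬ ((k : ℕ) + (b : ℕ) = 2 ^ n - 1) := by
      intro hcon
      exact hb (Fin.ext (by omega))
    have : Smat n k b = 0 := by
      simp only [Smat]; rw [if_neg hc]
    rw [this, zero_mul]
  · intro hmem; exact absurd (Finset.mem_univ m₀) hmem

lemma Smat_transpose {n : ℕ} (hev : Even n) : (Smat n)ᵀ = Smat n := by
  ext k j
  rw [Matrix.transpose_apply]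
  simp only [Smat]
  have hk := k.isLt
  have hj := j.isLt
  by_cases h : (j : ℕ) + (k : ℕ) = 2 ^ n - 1
  · rw [if_pos h, if_pos (by omega)]
    have hc : (2:ℕ) ^ n - 1 - (k : ℕ) = (j : ℕ) := by omega
    have := popCnt_compl n (k : ℕ) hk
    rw [hc] at this
    exact neg_one_pow_eq_of_even_add (by rw [this]; exact hev)
  · rw [if_neg h, if_neg (by omega)]

lemma Smat_conj (n : ℕ) : (Smat n).map (starRingEnd ℂ) = Smat n := by
  ext k j
  simp only [Matrix.map_apply, Smat]
  split_ifs <;> simp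
def A2mat : Matrix (Fin 2) (Fin 2) ℂ := !![0, -1; 1, 0]

def eqv (n : ℕ) : Fin 2 × Fin (2 ^ n) ≃ Fin (2 ^ (n + 1)) :=
  finProdFinEquiv.trans (finCongr (by rw [pow_succ, Nat.mul_comm]))

lemma eqv_val (n : ℕ) (p : Fin 2 × Fin (2 ^ n)) :
    ((eqv n p) : ℕ) = (p.2 : ℕ) + 2 ^ n * (p.1 : ℕ) := rfl

lemma Smat_succ_entry (n : ℕ) (a c : Fin 2) (b d : Fin (2 ^ n)) :
    Smat (n + 1) (eqv n (a, b)) (eqv n (c, d)) = A2mat a c * Smat n b d := by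
  have hb := b.isLt
  have hd := d.isLt
  have h2 : (2:ℕ) ^ (n + 1) = 2 * 2 ^ n := by rw [pow_succ]; ring
  have h1 : (1:ℕ) ≤ 2 ^ n := Nat.one_le_two_pow
  simp only [Smat, eqv_val]
  fin_cases a <;> fin_cases c <;>
    simp only [Fin.val_zero, Fin.val_one, Nat.mul_zero, Nat.mul_one, Nat.add_zero]
  · have hA : ∀ h h', A2mat ⟨0, h⟩ ⟨0, h'⟩ = 0 := fun _ _ => rfl
    rw [hA, zero_mul]; exact if_neg (show ¬ ((b:ℕ) + (d:ℕ) = 2 ^ (n+1) - 1) by omega)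
  · have hA : ∀ h h', A2mat ⟨0, h⟩ ⟨1, h'⟩ = -1 := fun _ _ => rfl
    rw [hA]
    have hcond : ((b:ℕ) + ((d:ℕ) + 2 ^ n) = 2 ^ (n+1) - 1) ↔ ((b:ℕ) + (d:ℕ) = 2 ^ n - 1) := by
      omega
    have hpc : popCnt ((d:ℕ) + 2 ^ n) = popCnt (d:ℕ) + 1 := by
      rw [Nat.add_comm]; exact popCnt_pow_add n d hd
    by_cases h : (b:ℕ) + (d:ℕ) = 2 ^ n - 1
    · rw [if_pos (hcond.mpr h), if_pos h, hpc, pow_succ]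
      ring
    · rw [if_neg (fun hc => h (hcond.mp hc)), if_neg h]
      ring
  · have hA : ∀ h h', A2mat ⟨1, h⟩ ⟨0, h'⟩ = 1 := fun _ _ => rfl
    rw [hA]
    have hcond : ((b:ℕ) + 2 ^ n + (d:ℕ) = 2 ^ (n+1) - 1) ↔ ((b:ℕ) + (d:ℕ) = 2 ^ n - 1) := by
      omega
    by_cases h : (b:ℕ) + (d:ℕ) = 2 ^ n - 1
    · rw [if_pos (hcond.mpr h), if_pos h, one_mul]
    · rw [if_neg (fun hc => h (hcond.mp hc)), if_neg h, one_mul]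
  · have hA : ∀ h h', A2mat ⟨1, h⟩ ⟨1, h'⟩ = 0 := fun _ _ => rfl
    rw [if_neg (by omega), hA, zero_mul]

lemma Smat_kron (n : ℕ) :
    Smat (n + 1) = (Matrix.reindex (eqv n) (eqv n)) (Matrix.kroneckerMap (· * ·) A2mat (Smat n)) := by
  ext k j
  obtain ⟨p, rfl⟩ := (eqv n).surjective k
  obtain ⟨q, rfl⟩ := (eqv n).surjective j
  rw [Matrix.reindex_apply, Matrix.submatrix_apply, Equiv.symm_apply_apply, Equiv.symm_apply_apply,
    Matrix.kroneckerMap_apply]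
  exact Smat_succ_entry n p.1 q.1 p.2 q.2

lemma Smat_det {n : ℕ} (hn : 1 ≤ n) : (Smat n).det = 1 := by
  obtain ⟨m, rfl⟩ : ∃ m, n = m + 1 := ⟨n - 1, by omega⟩
  rw [Smat_kron, Matrix.det_reindex_self, Matrix.det_kronecker]
  have hA : A2mat.det = 1 := by
    simp [A2mat, Matrix.det_fin_two_of]
  have hsq : (Smat m).det * (Smat m).det = 1 := by
    have h := congrArg Matrix.det (Smat_mul_transpose m)
    rwa [Matrix.det_mul, Matrix.det_transpose, Matrix.det_one] at h
  rw [hA, one_pow, one_mul, Fintype.card_fin, pow_two, hsq]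
lemma mapc_sub {I : Type*} (A B : Matrix I I ℂ) :
    (A - B).map (starRingEnd ℂ) = A.map (starRingEnd ℂ) - B.map (starRingEnd ℂ) := by
  ext i j; simp [Matrix.map_apply]

lemma mapc_add {I : Type*} (A B : Matrix I I ℂ) :
    (A + B).map (starRingEnd ℂ) = A.map (starRingEnd ℂ) + B.map (starRingEnd ℂ) := by
  ext i j; simp [Matrix.map_apply]

lemma mapc_smul {I : Type*} (r : ℂ) (A : Matrix I I ℂ) :
    (r • A).map (starRingEnd ℂ) = (starRingEnd ℂ r) • A.map (starRingEnd ℂ) := by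
  ext i j; simp [Matrix.map_apply]

lemma stdBM_conj {I : Type*} [DecidableEq I] (k l : I) :
    (Matrix.single k l (1:ℂ)).map (starRingEnd ℂ) = Matrix.single k l 1 := by
  ext i j
  simp only [Matrix.map_apply, Matrix.single, Matrix.of_apply]
  split_ifs <;> simp

lemma stdBM_conjT {I : Type*} [DecidableEq I] (k l : I) :
    (Matrix.single k l (1:ℂ))ᴴ = Matrix.single l k 1 := by
  ext i j
  simp only [Matrix.conjTranspose_apply, Matrix.single, Matrix.of_apply]
  split_ifs with h1 h2 h2 <;> simp_all


/-- **Characterization of entanglers** (for `n` even): `E ∈ SU(2^n)` intertwines the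
Cartan involution `X ↦ X̄` with `θ(X) = S X̄ S` (note `S⁻¹ = S` for `n` even) iff
`E Eᵀ = ξ S` for some `N`-th root of unity `ξ`. -/
theorem entangler_iff (n : ℕ) (hn : 1 ≤ n) (hev : Even n)
    (E : Matrix (Fin (2 ^ n)) (Fin (2 ^ n)) ℂ)
    (hE : E ∈ Matrix.unitaryGroup (Fin (2 ^ n)) ℂ) (hEdet : E.det = 1) :
    (∀ X : Matrix (Fin (2 ^ n)) (Fin (2 ^ n)) ℂ, Xᴴ = -X → X.trace = 0 →
        E * ((Eᴴ * X * E).map (starRingEnd ℂ)) * Eᴴ =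
          Smat n * (X.map (starRingEnd ℂ)) * Smat n) ↔
      (∃ ξ : ℂ, ξ ^ (2 ^ n) = 1 ∧ E * Eᵀ = ξ • Smat n) := by
  have h2n : (1:ℕ) ≤ 2 ^ n := Nat.one_le_two_pow
  have hSS : Smat n * Smat n = 1 := by
    have h := Smat_mul_transpose n
    rwa [Smat_transpose hev] at h
  have hSdet : (Smat n).det = 1 := Smat_det hn
  have hE1 : E * Eᴴ = 1 := by
    have := Matrix.mem_unitaryGroup_iff.mp hE
    rwa [Matrix.star_eq_conjTranspose] at this
  have hE2 : Eᴴ * E = 1 := by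
    have := Matrix.mem_unitaryGroup_iff'.mp hE
    rwa [Matrix.star_eq_conjTranspose] at this
  have hct : (Eᴴ)ᵀ = E.map (starRingEnd ℂ) := by
    ext i j; simp [Matrix.conjTranspose_apply]
  have htc : (Eᵀ).map (starRingEnd ℂ) = Eᴴ := by
    ext i j; simp [Matrix.conjTranspose_apply]
  have hctm : (Eᴴ).map (starRingEnd ℂ) = Eᵀ := by
    ext i j; simp [Matrix.conjTranspose_apply]
  have hTE : Eᵀ * (E.map (starRingEnd ℂ)) = 1 := by
    have h := congrArg Matrix.transpose hE2
    rwa [Matrix.transpose_mul, Matrix.transpose_one, hct] at h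
  have hET : (E.map (starRingEnd ℂ)) * Eᵀ = 1 := by
    have h := congrArg Matrix.transpose hE1
    rwa [Matrix.transpose_mul, Matrix.transpose_one, hct] at h
  set M := E * Eᵀ with hMdef
  set Mc := M.map (starRingEnd ℂ) with hMcdef
  have hMcE : Mc = (E.map (starRingEnd ℂ)) * Eᴴ := by
    rw [hMcdef, hMdef, Matrix.map_mul, htc]
  have hMMc : M * Mc = 1 := by
    rw [hMcE, hMdef]
    calc E * Eᵀ * (E.map (starRingEnd ℂ) * Eᴴ)
        = E * (Eᵀ * E.map (starRingEnd ℂ)) * Eᴴ := by noncomm_ring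
      _ = 1 := by rw [hTE, mul_one, hE1]
  have hMcM : Mc * M = 1 := by
    rw [hMcE, hMdef]
    calc E.map (starRingEnd ℂ) * Eᴴ * (E * Eᵀ)
        = E.map (starRingEnd ℂ) * (Eᴴ * E) * Eᵀ := by noncomm_ring
      _ = 1 := by rw [hE2, mul_one, hET]
  have hLHS : ∀ X : Matrix (Fin (2^n)) (Fin (2^n)) ℂ,
      E * ((Eᴴ * X * E).map (starRingEnd ℂ)) * Eᴴ = M * (X.map (starRingEnd ℂ)) * Mc := by
    intro X
    rw [Matrix.map_mul, Matrix.map_mul, hctm, hMcE, hMdef]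
    noncomm_ring
  constructor
  · intro h
    have key : ∀ k l : Fin (2 ^ n), k ≠ l →
        M * (Matrix.single k l 1) * Mc
          = Smat n * (Matrix.single k l 1) * Smat n := by
      intro k l hkl
      set B := Matrix.single k l (1:ℂ) with hB
      set B' := Matrix.single l k (1:ℂ) with hB'
      have hBconj : B.map (starRingEnd ℂ) = B := stdBM_conj k l
      have hB'conj : B'.map (starRingEnd ℂ) = B' := stdBM_conj l k
      have hBT : Bᴴ = B' := stdBM_conjT k l
      have hB'T : B'ᴴ = B := stdBM_conjT l k
      have htrB : B.trace = 0 := Matrix.trace_single_eq_of_ne k l 1 hkl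
      have htrB' : B'.trace = 0 := Matrix.trace_single_eq_of_ne l k 1 (Ne.symm hkl)
      have e1 : M * (B - B') * Mc = Smat n * (B - B') * Smat n := by
        have hXH : (B - B')ᴴ = -(B - B') := by
          rw [Matrix.conjTranspose_sub, hBT, hB'T, neg_sub]
        have hXt : (B - B').trace = 0 := by
          rw [Matrix.trace_sub, htrB, htrB', sub_zero]
        have hh := h (B - B') hXH hXt
        rw [hLHS] at hh
        rwa [mapc_sub, hBconj, hB'conj] at hh
      have e2 : M * (Complex.I • (B + B')) * Mc
          = Smat n * (Complex.I • (B + B')) * Smat n := by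
        have hXH : (Complex.I • (B + B'))ᴴ = -(Complex.I • (B + B')) := by
          rw [Matrix.conjTranspose_smul, Matrix.conjTranspose_add, hBT, hB'T]
          rw [star_def, Complex.conj_I, add_comm B' B, neg_smul]
        have hXt : (Complex.I • (B + B')).trace = 0 := by
          rw [Matrix.trace_smul, Matrix.trace_add, htrB, htrB', add_zero, smul_zero]
        have hh := h _ hXH hXt
        rw [hLHS] at hh
        rw [mapc_smul, mapc_add, hBconj, hB'conj, Complex.conj_I, neg_smul] at hh
        rw [mul_neg, neg_mul, mul_neg, neg_mul, neg_inj] at hh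
        exact hh
      set Y := Complex.I • (B + B') with hY
      have hcomb : M * (B - B' + (-Complex.I) • Y) * Mc
          = Smat n * (B - B' + (-Complex.I) • Y) * Smat n := by
        simp only [Matrix.mul_add, Matrix.add_mul, mul_smul_comm, smul_mul_assoc]
        rw [e1, e2]
      have hcombo : B - B' + (-Complex.I) • Y = (2:ℂ) • B := by
        rw [hY, smul_smul]
        rw [show (-Complex.I) * Complex.I = 1 by
          rw [neg_mul, Complex.I_mul_I, neg_neg], one_smul, two_smul]
        abel
      rw [hcombo] at hcomb
      simp only [smul_mul_assoc, mul_smul_comm] at hcomb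
      exact smul_right_injective _ (two_ne_zero) hcomb
    have hcomm : ∀ k l : Fin (2 ^ n), k ≠ l →
        Commute (Matrix.single k l 1) (Smat n * M) := by
      intro k l hkl
      have eB := key k l hkl
      have l1 : Smat n * (M * Matrix.single k l 1 * Mc) * M
          = Smat n * M * Matrix.single k l 1 := by
        calc Smat n * (M * Matrix.single k l 1 * Mc) * M
            = Smat n * M * Matrix.single k l 1 * (Mc * M) := by noncomm_ring
          _ = _ := by rw [hMcM, mul_one]
      have l2 : Smat n * (Smat n * Matrix.single k l 1 * Smat n) * M
          = Matrix.single k l 1 * (Smat n * M) := by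
        calc Smat n * (Smat n * Matrix.single k l 1 * Smat n) * M
            = (Smat n * Smat n) * (Matrix.single k l 1 * (Smat n * M)) := by noncomm_ring
          _ = _ := by rw [hSS, one_mul]
      have h3 := congrArg (fun Y => Smat n * Y * M) eB
      rw [l1, l2] at h3
      exact h3.symm
    obtain ⟨c, hc⟩ := Matrix.mem_range_scalar_of_commute_single
      (fun k l hkl => hcomm k l hkl)
    have hscalar : Matrix.scalar (Fin (2^n)) c = c • (1 : Matrix (Fin (2^n)) (Fin (2^n)) ℂ) := by
      ext i j
      simp only [Matrix.scalar_apply, Matrix.smul_apply, Matrix.one_apply, Matrix.diagonal]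
      by_cases hij : i = j <;> simp [hij]
    have hMeq : M = c • Smat n := by
      have h5 := congrArg (fun Y => Smat n * Y) hc
      rw [hscalar, ← mul_assoc, hSS, one_mul] at h5
      rw [← h5, mul_smul_comm, mul_one]
    refine ⟨c, ?_, hMeq⟩
    have hdet : M.det = 1 := by
      rw [hMdef, Matrix.det_mul, Matrix.det_transpose, hEdet, one_mul]
    rw [hMeq, Matrix.det_smul, hSdet, mul_one, Fintype.card_fin] at hdet
    exact hdet
  · rintro ⟨ξ, hξ, hEEt⟩ X _ _
    rw [hLHS X]
    have hMc : Mc = (starRingEnd ℂ ξ) • Smat n := by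
      rw [hMcdef, hEEt, mapc_smul, Smat_conj]
    have habs : ξ * (starRingEnd ℂ) ξ = 1 := by
      have hNz : ((Complex.normSq ξ : ℝ) : ℂ) ^ (2^n) = 1 := by
        calc ((Complex.normSq ξ : ℝ) : ℂ) ^ (2^n)
            = (ξ * (starRingEnd ℂ) ξ) ^ (2^n) := by rw [Complex.mul_conj]
          _ = ξ ^ (2^n) * (starRingEnd ℂ) (ξ ^ (2^n)) := by rw [mul_pow, map_pow]
          _ = 1 := by rw [hξ]; simp
      have hr : (Complex.normSq ξ) ^ (2^n) = 1 := by exact_mod_cast hNz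
      have hnn : 0 ≤ Complex.normSq ξ := Complex.normSq_nonneg ξ
      have hNne : (2:ℕ)^n ≠ 0 := by positivity
      have h1 : Complex.normSq ξ = 1 := by
        rcases lt_trichotomy (Complex.normSq ξ) 1 with hlt | heq | hgt
        · exfalso
          have := pow_lt_one₀ hnn hlt hNne
          rw [hr] at this; exact lt_irrefl 1 this
        · exact heq
        · exfalso
          have := one_lt_pow₀ hgt hNne
          rw [hr] at this; exact lt_irrefl 1 this
      rw [Complex.mul_conj, h1]; norm_num
    rw [hEEt, hMc]
    simp only [smul_mul_assoc, mul_smul_comm, smul_smul]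
    rw [show (starRingEnd ℂ) ξ * ξ = 1 from by rw [mul_comm]; exact habs, one_smul]
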